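/- If G is a graph of order n with minimum degree at least k, then the k-tuple total restrained domatic number d^r_{×k,t}(G) is at most n/(k+1). -/

import Mathlib

open SimpleGraph

/-- `S` is a `k`-tuple total restrained dominating set of `G`: every vertex has at
least `k` neighbors in `S`, and every vertex outside `S` has at least `k` neighbors
outside `S`. -/
def IsKTRDS {V : Type*} (G : SimpleGraph V) (k : ℕ) (S : Set V) : Prop :=
  (∀ v : V, k ≤ (S ∩ G.neighborSet v).ncard) ∧
  (∀ v : V, v ∉ S → k ≤ (Sᶜ ∩ G.neighborSet v).ncard)

/-- `S` is a `k`-tuple total dominating set of `G`. -/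
def IsKTDS {V : Type*} (G : SimpleGraph V) (k : ℕ) (S : Set V) : Prop :=
  ∀ v : V, k ≤ (S ∩ G.neighborSet v).ncard

/-- The `k`-tuple total restrained domination number of `G`. -/
noncomputable def ktrdNum {V : Type*} (G : SimpleGraph V) (k : ℕ) : ℕ :=
  sInf {m | ∃ S : Set V, IsKTRDS G k S ∧ S.ncard = m}

/-- The `k`-tuple total domination number of `G`. -/
noncomputable def ktNum {V : Type*} (G : SimpleGraph V) (k : ℕ) : ℕ :=
  sInf {m | ∃ S : Set V, IsKTDS G k S ∧ S.ncard = m}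

/-- The `k`-tuple total restrained domatic number of `G`. -/
noncomputable def ktrdDomatic {V : Type*} (G : SimpleGraph V) (k : ℕ) : ℕ :=
  sSup {d | ∃ f : Fin d → Set V, (∀ i, IsKTRDS G k (f i)) ∧ ∀ v : V, ∃! i, v ∈ f i}

/-- The `k`-tuple total domatic number of `G`. -/
noncomputable def ktDomatic {V : Type*} (G : SimpleGraph V) (k : ℕ) : ℕ :=
  sSup {d | ∃ f : Fin d → Set V, (∀ i, IsKTDS G k (f i)) ∧ ∀ v : V, ∃! i, v ∈ f i}

theorem stmt_16 {V : Type*} [Fintype V] (G : SimpleGraph V) (k : ℕ) (hk : 1 ≤ k)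
    (hδ : ∀ v : V, k ≤ (G.neighborSet v).ncard) :
    (ktrdDomatic G k : ℝ) ≤ (Fintype.card V : ℝ) / (k + 1) := by
  classical
  by_cases hV : Nonempty V
  · obtain ⟨v₀⟩ := hV
    have key : ∀ d ∈ {d | ∃ f : Fin d → Set V,
        (∀ i, IsKTRDS G k (f i)) ∧ ∀ v : V, ∃! i, v ∈ f i},
        d * (k + 1) ≤ Fintype.card V := by
      rintro d ⟨f, hf, hpart⟩
      -- each class has size ≥ k+1
      have hsize : ∀ i, k + 1 ≤ (f i).toFinset.card := by
        intro i
        have h1 := (hf i).1 v₀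
        have hne : (f i ∩ G.neighborSet v₀).Nonempty := by
          rw [← Set.ncard_pos (Set.toFinite _)] at *
          omega
        obtain ⟨v, hv, -⟩ := hne
        have hsub : insert v (f i ∩ G.neighborSet v) ⊆ f i := by
          intro x hx
          rcases hx with rfl | ⟨hx1, -⟩
          · exact hv
          · exact hx1
        have hvnot : v ∉ f i ∩ G.neighborSet v := by
          rintro ⟨-, h⟩
          exact G.loopless.irrefl v h
        have := Set.ncard_le_ncard hsub (Set.toFinite _)
        rw [Set.ncard_insert_of_notMem hvnot (Set.toFinite _)] at this
        have h2 := (hf i).1 v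
        rw [← Set.ncard_eq_toFinset_card']
        omega
      have hdisj : ∀ i j, i ≠ j →
          Disjoint (f i).toFinset (f j).toFinset := by
        intro i j hij
        rw [Finset.disjoint_left]
        intro a hai haj
        simp only [Set.mem_toFinset] at hai haj
        obtain ⟨c, -, hu⟩ := hpart a
        exact hij ((hu i hai).trans (hu j haj).symm)
      have hcover : (Finset.univ : Finset V)
          = Finset.univ.biUnion (fun i : Fin d => (f i).toFinset) := by
        ext a
        simp only [Finset.mem_univ, Finset.mem_biUnion, Set.mem_toFinset, true_iff]
        obtain ⟨c, hc, -⟩ := hpart a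
        exact ⟨c, trivial, hc⟩
      have hcard : Fintype.card V = ∑ i : Fin d, (f i).toFinset.card := by
        rw [← Finset.card_univ, hcover,
          Finset.card_biUnion (fun i _ j _ h => hdisj i j h)]
      calc d * (k + 1) = ∑ _i : Fin d, (k + 1) := by
            simp [mul_comm]
        _ ≤ ∑ i : Fin d, (f i).toFinset.card :=
            Finset.sum_le_sum fun i _ => hsize i
        _ = Fintype.card V := hcard.symm
    have hle : ktrdDomatic G k ≤ Fintype.card V / (k + 1) := by
      apply csSup_le'
      intro d hd
      rw [Nat.le_div_iff_mul_le (by omega)]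
      exact key d hd
    calc (ktrdDomatic G k : ℝ) ≤ ((Fintype.card V / (k + 1) : ℕ) : ℝ) := by
          exact_mod_cast hle
      _ ≤ (Fintype.card V : ℝ) / ((k + 1 : ℕ) : ℝ) := Nat.cast_div_le
      _ = (Fintype.card V : ℝ) / (k + 1) := by push_cast; ring_nf
  · have : ¬ BddAbove {d | ∃ f : Fin d → Set V,
        (∀ i, IsKTRDS G k (f i)) ∧ ∀ v : V, ∃! i, v ∈ f i} := by
      rintro ⟨b, hb⟩
      have : b + 1 ≤ b := hb ⟨fun _ => ∅,
        fun i => ⟨fun v => absurd ⟨v⟩ hV, fun v _ => absurd ⟨v⟩ hV⟩,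
        fun v => absurd ⟨v⟩ hV⟩
      omega
    have h0 : ktrdDomatic G k = 0 := by
      unfold ktrdDomatic
      rw [csSup_of_not_bddAbove this, csSup_empty]
      rfl
    rw [h0]
    push_cast
    positivity
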